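/- Let Γ be a discrete group with 2-cocycle σ, let M = vN(Γ,σ) be the σ-twisted group von Neumann algebra on ℓ²(Γ), and let Tr : M → M be a linear map whose values lie in the center Z(M) = M ∩ M', satisfying Tr(ab) = Tr(ba) for all a,b ∈ M and Tr(z) = z for all z ∈ Z(M). If γ ∈ Γ has a finite σ-regular conjugacy class C_γ = {β₁⁻¹γβ₁, …, β_k⁻¹γβ_k} (with the listed elements pairwise distinct, β_j ∈ Γ), then Tr(λ_σ(γ)) = |C_γ|⁻¹ · Σ_{j=1}^{k} σ(γ, β_j) · conj(σ(β_j, β_j⁻¹γβ_j)) · λ_σ(β_j⁻¹γβ_j). -/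

import Mathlib

open scoped ComplexConjugate

set_option maxHeartbeats 1600000 in
/-- the value of a center-valued trace on `λ_σ(γ)` for `γ` with a finite
`σ`-regular conjugacy class `{β₁⁻¹γβ₁, …, β_k⁻¹γβ_k}`. -/
theorem centerValuedTrace_twisted_leftRegular {Γ : Type*} [Group Γ]
    (σ : Γ → Γ → ℂ)
    (hσ_unit : ∀ x y, ‖σ x y‖ = 1)
    (hσ_cocycle : ∀ x y z, σ x y * σ (x * y) z = σ x (y * z) * σ y z)
    (hσ_one : σ 1 1 = 1)
    -- the σ-projective left regular representation on ℓ²(Γ)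
    (lam : Γ → (lp (fun _ : Γ => ℂ) 2 →L[ℂ] lp (fun _ : Γ => ℂ) 2))
    (hlam : ∀ (γ : Γ) (f : lp (fun _ : Γ => ℂ) 2) (γ' : Γ),
      (lam γ f) γ' = σ γ (γ⁻¹ * γ') * f (γ⁻¹ * γ'))
    -- M = vN(Γ,σ), the double commutant of {λ_σ(γ)}
    (M : Set (lp (fun _ : Γ => ℂ) 2 →L[ℂ] lp (fun _ : Γ => ℂ) 2))
    (hM : M = {a | ∀ b, (∀ γ : Γ, b * lam γ = lam γ * b) → a * b = b * a})
    -- a linear map with values in the center Z(M) = M ∩ M', tracial, identity on Z(M)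
    (Tr : (lp (fun _ : Γ => ℂ) 2 →L[ℂ] lp (fun _ : Γ => ℂ) 2) →ₗ[ℂ]
      (lp (fun _ : Γ => ℂ) 2 →L[ℂ] lp (fun _ : Γ => ℂ) 2))
    (hTr_center : ∀ a ∈ M, Tr a ∈ M ∧ ∀ b ∈ M, Tr a * b = b * Tr a)
    (hTr_trace : ∀ a ∈ M, ∀ b ∈ M, Tr (a * b) = Tr (b * a))
    (hTr_id : ∀ z ∈ M, (∀ b ∈ M, z * b = b * z) → Tr z = z)
    -- γ has a σ-regular conjugacy class, listed without repetition as β_j⁻¹ γ β_j, j = 1,…,k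
    (γ : Γ)
    (hreg : ∀ γ' : Γ, γ * γ' = γ' * γ → σ γ γ' = σ γ' γ)
    (k : ℕ) (β : Fin k → Γ)
    (hinj : Function.Injective fun j : Fin k => (β j)⁻¹ * γ * β j)
    (hcover : ∀ δ : Γ, (∃ τ : Γ, τ⁻¹ * γ * τ = δ) → ∃ j : Fin k, (β j)⁻¹ * γ * β j = δ) :
    Tr (lam γ) = (k : ℂ)⁻¹ •
      ∑ j : Fin k, (σ γ (β j) * conj (σ (β j) ((β j)⁻¹ * γ * β j))) •
        lam ((β j)⁻¹ * γ * β j) := by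
  classical
  -- basic scalar facts
  have hσ_ne : ∀ x y, σ x y ≠ 0 := by
    intro x y h
    have := hσ_unit x y
    rw [h] at this; simp at this
  have hconj : ∀ x y, conj (σ x y) * σ x y = 1 := by
    intro x y
    rw [mul_comm, Complex.mul_conj, Complex.normSq_eq_norm_sq, hσ_unit]
    norm_num
  have hσ1l : ∀ x, σ 1 x = 1 := by
    intro x
    have h := hσ_cocycle 1 1 x
    simp only [one_mul, hσ_one] at h
    exact mul_left_cancel₀ (hσ_ne 1 x) (h.symm.trans (mul_one _).symm)
  have hσ1r : ∀ x, σ x 1 = 1 := by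
    intro x
    have h := hσ_cocycle x 1 1
    simp only [mul_one, one_mul, hσ_one] at h
    exact mul_left_cancel₀ (hσ_ne x 1) (h.trans (mul_one _).symm)
  have hσinv : ∀ x : Γ, σ x x⁻¹ = σ x⁻¹ x := by
    intro x
    have h := hσ_cocycle x x⁻¹ x
    rw [mul_inv_cancel, inv_mul_cancel, hσ1l, hσ1r, mul_one, one_mul] at h
    exact h
  -- multiplication rule
  have hmul : ∀ a b : Γ, lam a * lam b = σ a b • lam (a * b) := by
    intro a b
    refine ContinuousLinearMap.ext fun f => lp.ext (funext fun x => ?_)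
    have h := hσ_cocycle a b (b⁻¹ * (a⁻¹ * x))
    rw [mul_inv_cancel_left] at h
    show ((lam a) ((lam b) f)) x = ((σ a b • lam (a * b)) f) x
    rw [hlam, hlam, ContinuousLinearMap.smul_apply, lp.coeFn_smul, Pi.smul_apply, hlam]
    have harg : (a * b)⁻¹ * x = b⁻¹ * (a⁻¹ * x) := by group
    rw [harg]
    simp only [smul_eq_mul]
    linear_combination (f (b⁻¹ * (a⁻¹ * x))) * h.symm
  have hone : lam 1 = 1 := by
    refine ContinuousLinearMap.ext fun f => lp.ext (funext fun x => ?_)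
    rw [hlam]
    simp [hσ1l]
  -- inverses
  have hwl : ∀ b : Γ, (conj (σ b b⁻¹) • lam b⁻¹) * lam b = 1 := by
    intro b
    rw [smul_mul_assoc, hmul, inv_mul_cancel, hone, smul_smul, ← hσinv, hconj, one_smul]
  have hwr : ∀ b : Γ, lam b * (conj (σ b b⁻¹) • lam b⁻¹) = 1 := by
    intro b
    rw [mul_smul_comm, hmul, mul_inv_cancel, hone, smul_smul, hconj, one_smul]
  -- conjugation formula (L2)
  have hL2 : ∀ b : Γ, (conj (σ b b⁻¹) • lam b⁻¹) * lam γ * lam b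
      = (σ γ b * conj (σ b (b⁻¹ * γ * b))) • lam (b⁻¹ * γ * b) := by
    intro b
    have h1 : lam γ * lam b
        = (σ γ b * conj (σ b (b⁻¹ * γ * b))) • (lam b * lam (b⁻¹ * γ * b)) := by
      rw [hmul, hmul]
      have harg : b * (b⁻¹ * γ * b) = γ * b := by group
      rw [harg, smul_smul]
      congr 1
      rw [mul_assoc, hconj, mul_one]
    calc (conj (σ b b⁻¹) • lam b⁻¹) * lam γ * lam b
        = (conj (σ b b⁻¹) • lam b⁻¹) * (lam γ * lam b) := mul_assoc _ _ _
      _ = (conj (σ b b⁻¹) • lam b⁻¹) *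
            ((σ γ b * conj (σ b (b⁻¹ * γ * b))) • (lam b * lam (b⁻¹ * γ * b))) := by
          rw [h1]
      _ = (σ γ b * conj (σ b (b⁻¹ * γ * b))) •
            (((conj (σ b b⁻¹) • lam b⁻¹) * lam b) * lam (b⁻¹ * γ * b)) := by
          rw [mul_smul_comm, ← mul_assoc ((conj (σ b b⁻¹) • lam b⁻¹))]
      _ = (σ γ b * conj (σ b (b⁻¹ * γ * b))) • lam (b⁻¹ * γ * b) := by
          rw [hwl, one_mul]
  -- transport of the conjugation formula (F1)
  have hF1 : ∀ (b τ : Γ),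
      lam τ * ((σ γ b * conj (σ b (b⁻¹ * γ * b))) • lam (b⁻¹ * γ * b))
        * (conj (σ τ τ⁻¹) • lam τ⁻¹)
      = (σ γ (b * τ⁻¹) * conj (σ (b * τ⁻¹) ((b * τ⁻¹)⁻¹ * γ * (b * τ⁻¹)))) •
          lam ((b * τ⁻¹)⁻¹ * γ * (b * τ⁻¹)) := by
    intro b τ
    rw [← hL2 b, ← hL2 (b * τ⁻¹)]
    have hA : lam b * (conj (σ τ τ⁻¹) • lam τ⁻¹)
        = (conj (σ τ τ⁻¹) * σ b τ⁻¹) • lam (b * τ⁻¹) := by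
      rw [mul_smul_comm, hmul, smul_smul]
    have harg : (b * τ⁻¹)⁻¹ = τ * b⁻¹ := by rw [mul_inv_rev, inv_inv]
    have hB : lam τ * (conj (σ b b⁻¹) • lam b⁻¹)
        = (conj (σ b b⁻¹) * σ τ b⁻¹ * σ (b * τ⁻¹) (τ * b⁻¹)) •
            (conj (σ (b * τ⁻¹) (b * τ⁻¹)⁻¹) • lam (b * τ⁻¹)⁻¹) := by
      rw [mul_smul_comm, hmul, harg, smul_smul, smul_smul]
      congr 1
      rw [mul_assoc, mul_comm (σ (b * τ⁻¹) (τ * b⁻¹)), hconj, mul_one]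
    have hts : (conj (σ b b⁻¹) * σ τ b⁻¹ * σ (b * τ⁻¹) (τ * b⁻¹))
        * (conj (σ τ τ⁻¹) * σ b τ⁻¹) = 1 := by
      have h1 := hσ_cocycle b τ⁻¹ (τ * b⁻¹)
      have h2 := hσ_cocycle τ τ⁻¹ (τ * b⁻¹)
      have e1 : τ⁻¹ * (τ * b⁻¹) = b⁻¹ := inv_mul_cancel_left τ b⁻¹
      have e2 : τ * τ⁻¹ = (1 : Γ) := mul_inv_cancel τ
      rw [e1] at h1 h2
      rw [e2, hσ1l, mul_one] at h2
      have key : σ τ b⁻¹ * (σ (b * τ⁻¹) (τ * b⁻¹) * σ b τ⁻¹) = σ b b⁻¹ * σ τ τ⁻¹ := by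
        rw [h2]
        linear_combination σ τ b⁻¹ * h1
      calc (conj (σ b b⁻¹) * σ τ b⁻¹ * σ (b * τ⁻¹) (τ * b⁻¹))
            * (conj (σ τ τ⁻¹) * σ b τ⁻¹)
          = (conj (σ b b⁻¹) * conj (σ τ τ⁻¹)) *
              (σ τ b⁻¹ * (σ (b * τ⁻¹) (τ * b⁻¹) * σ b τ⁻¹)) := by ring
        _ = (conj (σ b b⁻¹) * conj (σ τ τ⁻¹)) * (σ b b⁻¹ * σ τ τ⁻¹) := by rw [key]
        _ = (conj (σ b b⁻¹) * σ b b⁻¹) * (conj (σ τ τ⁻¹) * σ τ τ⁻¹) := by ring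
        _ = 1 := by rw [hconj, hconj, mul_one]
    calc lam τ * ((conj (σ b b⁻¹) • lam b⁻¹) * lam γ * lam b) * (conj (σ τ τ⁻¹) • lam τ⁻¹)
        = (lam τ * (conj (σ b b⁻¹) • lam b⁻¹)) * lam γ *
            (lam b * (conj (σ τ τ⁻¹) • lam τ⁻¹)) := by
          simp only [mul_assoc]
      _ = ((conj (σ b b⁻¹) * σ τ b⁻¹ * σ (b * τ⁻¹) (τ * b⁻¹)) •
            (conj (σ (b * τ⁻¹) (b * τ⁻¹)⁻¹) • lam (b * τ⁻¹)⁻¹)) * lam γ *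
            ((conj (σ τ τ⁻¹) * σ b τ⁻¹) • lam (b * τ⁻¹)) := by
          rw [hA, hB]
      _ = ((conj (σ b b⁻¹) * σ τ b⁻¹ * σ (b * τ⁻¹) (τ * b⁻¹)) * (conj (σ τ τ⁻¹) * σ b τ⁻¹)) •
            ((conj (σ (b * τ⁻¹) (b * τ⁻¹)⁻¹) • lam (b * τ⁻¹)⁻¹) * lam γ * lam (b * τ⁻¹)) := by
          rw [smul_mul_assoc, smul_mul_assoc, mul_smul_comm, smul_smul, mul_comm
            (conj (σ b b⁻¹) * σ τ b⁻¹ * σ (b * τ⁻¹) (τ * b⁻¹))]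
      _ = (conj (σ (b * τ⁻¹) (b * τ⁻¹)⁻¹) • lam (b * τ⁻¹)⁻¹) * lam γ * lam (b * τ⁻¹) := by
          rw [hts, one_smul]
  -- well-definedness of the coefficient on the conjugacy class (L3)
  have hL3 : ∀ b b' : Γ, b⁻¹ * γ * b = b'⁻¹ * γ * b' →
      (σ γ b * conj (σ b (b⁻¹ * γ * b))) • lam (b⁻¹ * γ * b)
      = (σ γ b' * conj (σ b' (b'⁻¹ * γ * b'))) • lam (b'⁻¹ * γ * b') := by
    intro b b' h
    rw [← hL2 b, ← hL2 b']
    have hc : γ * (b * b'⁻¹) = (b * b'⁻¹) * γ := by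
      have h2 := congrArg (fun x => b * x * b'⁻¹) h
      simpa [mul_assoc] using h2
    have hcomm : lam γ * lam (b * b'⁻¹) = lam (b * b'⁻¹) * lam γ := by
      rw [hmul, hmul, hreg _ hc, hc]
    have hrep : lam b * (conj (σ b' b'⁻¹) • lam b'⁻¹)
        = (conj (σ b' b'⁻¹) * σ b b'⁻¹) • lam (b * b'⁻¹) := by
      rw [mul_smul_comm, hmul, smul_smul]
    have G' : lam γ * (lam b * (conj (σ b' b'⁻¹) • lam b'⁻¹))
        = (lam b * (conj (σ b' b'⁻¹) • lam b'⁻¹)) * lam γ := by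
      rw [hrep, mul_smul_comm, smul_mul_assoc, hcomm]
    have e1 : lam γ * lam b
        = lam b * ((conj (σ b' b'⁻¹) • lam b'⁻¹) * (lam γ * lam b')) := by
      calc lam γ * lam b
          = lam γ * lam b * ((conj (σ b' b'⁻¹) • lam b'⁻¹) * lam b') := by
            rw [hwl, mul_one]
        _ = (lam γ * (lam b * (conj (σ b' b'⁻¹) • lam b'⁻¹))) * lam b' := by
            simp only [mul_assoc]
        _ = ((lam b * (conj (σ b' b'⁻¹) • lam b'⁻¹)) * lam γ) * lam b' := by
            rw [G']
        _ = lam b * ((conj (σ b' b'⁻¹) • lam b'⁻¹) * (lam γ * lam b')) := by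
            simp only [mul_assoc]
    calc (conj (σ b b⁻¹) • lam b⁻¹) * lam γ * lam b
        = (conj (σ b b⁻¹) • lam b⁻¹) * (lam γ * lam b) := by
          simp only [mul_assoc]
      _ = (conj (σ b b⁻¹) • lam b⁻¹) *
            (lam b * ((conj (σ b' b'⁻¹) • lam b'⁻¹) * (lam γ * lam b'))) := by
          rw [e1]
      _ = ((conj (σ b b⁻¹) • lam b⁻¹) * lam b) *
            ((conj (σ b' b'⁻¹) • lam b'⁻¹) * (lam γ * lam b')) := by
          simp only [mul_assoc]
      _ = (conj (σ b' b'⁻¹) • lam b'⁻¹) * lam γ * lam b' := by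
          rw [hwl, one_mul]
          simp only [mul_assoc]
  -- the sum over the conjugacy class
  set z : lp (fun _ : Γ => ℂ) 2 →L[ℂ] lp (fun _ : Γ => ℂ) 2 :=
    ∑ j : Fin k, (σ γ (β j) * conj (σ (β j) ((β j)⁻¹ * γ * β j))) •
      lam ((β j)⁻¹ * γ * β j) with hz
  -- membership facts
  have hlamM : ∀ a : Γ, lam a ∈ M := by
    rw [hM]; intro a b hb; exact (hb a).symm
  have hsmulM : ∀ (s : ℂ) a, a ∈ M → s • a ∈ M := by
    rw [hM]; intro s a ha b hb
    rw [smul_mul_assoc, ha b hb, mul_smul_comm]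
  have hmulM : ∀ a b, a ∈ M → b ∈ M → a * b ∈ M := by
    rw [hM]; intro a b ha hb c hc
    rw [mul_assoc, hb c hc, ← mul_assoc, ha c hc, mul_assoc]
  have hzM : z ∈ M := by
    rw [hM]; intro b hb
    rw [hz, Finset.sum_mul, Finset.mul_sum]
    refine Finset.sum_congr rfl fun j _ => ?_
    rw [smul_mul_assoc, ← hb _, mul_smul_comm]
  -- centrality of z
  have hzc : ∀ τ : Γ, lam τ * z = z * lam τ := by
    intro τ
    have hex : ∀ j : Fin k, ∃ i : Fin k,
        (β i)⁻¹ * γ * β i = (β j * τ⁻¹)⁻¹ * γ * (β j * τ⁻¹) :=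
      fun j => hcover _ ⟨β j * τ⁻¹, rfl⟩
    choose π hπ using hex
    have hπinj : Function.Injective π := by
      intro j j' hjj
      apply hinj
      have e1 := hπ j
      have e2 := hπ j'
      rw [hjj] at e1
      have e3 : (β j * τ⁻¹)⁻¹ * γ * (β j * τ⁻¹) = (β j' * τ⁻¹)⁻¹ * γ * (β j' * τ⁻¹) :=
        e1.symm.trans e2
      have e4 := congrArg (fun x => τ⁻¹ * x * τ) e3
      simpa [mul_assoc] using e4
    have hπbij : Function.Bijective π := Finite.injective_iff_bijective.mp hπinj
    have hstep : lam τ * z * (conj (σ τ τ⁻¹) • lam τ⁻¹) = z := by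
      rw [hz, Finset.mul_sum, Finset.sum_mul]
      have hterm : ∀ j : Fin k, lam τ *
            ((σ γ (β j) * conj (σ (β j) ((β j)⁻¹ * γ * β j))) • lam ((β j)⁻¹ * γ * β j)) *
            (conj (σ τ τ⁻¹) • lam τ⁻¹)
          = (σ γ (β (π j)) * conj (σ (β (π j)) ((β (π j))⁻¹ * γ * β (π j)))) •
              lam ((β (π j))⁻¹ * γ * β (π j)) := by
        intro j
        rw [hF1 (β j) τ, ← hL3 (β (π j)) (β j * τ⁻¹) (hπ j)]
      rw [Finset.sum_congr rfl (fun j _ => hterm j)]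
      exact Fintype.sum_bijective π hπbij _ _ (fun _ => rfl)
    calc lam τ * z = lam τ * z * ((conj (σ τ τ⁻¹) • lam τ⁻¹) * lam τ) := by
          rw [hwl, mul_one]
      _ = (lam τ * z * (conj (σ τ τ⁻¹) • lam τ⁻¹)) * lam τ := by
          simp only [mul_assoc]
      _ = z * lam τ := by rw [hstep]
  -- Tr z = z
  have htrz : Tr z = z := by
    refine hTr_id z hzM fun b hb => ?_
    rw [hM] at hb
    exact (hb z fun τ => (hzc τ).symm).symm
  -- the trace of lam γ in terms of each conjugate
  have htrj : ∀ b : Γ, Tr (lam γ)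
      = (σ γ b * conj (σ b (b⁻¹ * γ * b))) • Tr (lam (b⁻¹ * γ * b)) := by
    intro b
    have h1 : Tr (lam γ) = Tr ((lam γ * lam b) * (conj (σ b b⁻¹) • lam b⁻¹)) := by
      rw [mul_assoc (lam γ), hwr, mul_one]
    rw [h1, hTr_trace _ (hmulM _ _ (hlamM γ) (hlamM b)) _
      (hsmulM _ _ (hlamM b⁻¹)), ← mul_assoc, hL2 b, map_smul]
  -- assemble
  have hk : (k : ℂ) ≠ 0 := by
    rcases hcover γ ⟨1, by simp⟩ with ⟨j, _⟩
    have hk0 : k ≠ 0 := by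
      intro h; subst h; exact j.elim0
    exact_mod_cast Nat.cast_ne_zero.mpr hk0
  have hsum : (k : ℂ) • Tr (lam γ) = z := by
    have h1 : ∑ _j : Fin k, Tr (lam γ) = (k : ℂ) • Tr (lam γ) := by
      rw [Finset.sum_const, Finset.card_univ, Fintype.card_fin,
        ← Nat.cast_smul_eq_nsmul ℂ]
    rw [← h1]
    have h2 : ∑ _j : Fin k, Tr (lam γ)
        = ∑ j : Fin k, (σ γ (β j) * conj (σ (β j) ((β j)⁻¹ * γ * β j))) •
            Tr (lam ((β j)⁻¹ * γ * β j)) :=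
      Finset.sum_congr rfl fun j _ => htrj (β j)
    rw [h2, ← htrz, hz, map_sum]
    refine Finset.sum_congr rfl fun j _ => ?_
    rw [map_smul]
  rw [← hsum, smul_smul, inv_mul_cancel₀ hk, one_smul]
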